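/- For every real p with 1 ≤ p < 2 and all complex numbers z, w, we have 2|z|^p + 2|w|^p - |z+w|^p - |z-w|^p ≥ 0; and for every real p > 2 and all complex z, w, we have 2|z|^p + 2|w|^p - |z+w|^p - |z-w|^p ≤ 0. -/

import Mathlib

open NNReal

private lemma concave_step (u v : ℝ≥0) {r : ℝ} (hr0 : 0 < r) (hr1 : r ≤ 1) :
    u ^ r + v ^ r ≤ 2 ^ (1 - r) * (u + v) ^ r := by
  have h1r : (1 : ℝ) ≤ 1 / r := by
    rw [le_div_iff₀ hr0]; simpa using hr1
  have h := NNReal.rpow_add_le_mul_rpow_add_rpow (u ^ r) (v ^ r) h1r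
  have huv : ∀ x : ℝ≥0, (x ^ r) ^ (1 / r) = x := fun x => by
    rw [← NNReal.rpow_mul, mul_one_div, div_self hr0.ne', NNReal.rpow_one]
  rw [huv u, huv v] at h
  have h2 := NNReal.rpow_le_rpow h hr0.le
  have he : r⁻¹ * r - 1 * r = 1 - r := by field_simp
  rwa [← NNReal.rpow_mul, one_div, inv_mul_cancel₀ hr0.ne', NNReal.rpow_one,
    NNReal.mul_rpow, ← NNReal.rpow_mul, sub_mul, he] at h2

private lemma convex_step (u v : ℝ≥0) {r : ℝ} (hr1 : 1 ≤ r) :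
    2 ^ (1 - r) * (u + v) ^ r ≤ u ^ r + v ^ r := by
  have h := NNReal.rpow_add_le_mul_rpow_add_rpow u v hr1
  calc 2 ^ (1 - r) * (u + v) ^ r ≤ 2 ^ (1 - r) * (2 ^ (r - 1) * (u ^ r + v ^ r)) := by
        exact mul_le_mul_right h _
    _ = u ^ r + v ^ r := by
        rw [← mul_assoc, ← NNReal.rpow_add two_ne_zero]
        norm_num

private lemma nn_key (A B x y : ℝ≥0) (h : A ^ (2:ℝ) + B ^ (2:ℝ) = 2 * (x ^ (2:ℝ) + y ^ (2:ℝ)))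
    {p : ℝ} (hp : 1 ≤ p) :
    (p ≤ 2 → A ^ p + B ^ p ≤ 2 * x ^ p + 2 * y ^ p) ∧
    (2 ≤ p → 2 * x ^ p + 2 * y ^ p ≤ A ^ p + B ^ p) := by
  set r := p / 2 with hr
  have hr0 : 0 < r := by positivity
  have hsq : ∀ t : ℝ≥0, (t ^ (2:ℝ)) ^ r = t ^ p := fun t => by
    rw [← NNReal.rpow_mul, hr]; ring_nf
  have h2r : (2 : ℝ≥0) ^ (1 - r) * (2 : ℝ≥0) ^ r = 2 := by
    rw [← NNReal.rpow_add two_ne_zero]; norm_num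
  constructor
  · intro hp2
    have hr1 : r ≤ 1 := by rw [hr]; linarith
    calc A ^ p + B ^ p = (A ^ (2:ℝ)) ^ r + (B ^ (2:ℝ)) ^ r := by rw [hsq, hsq]
      _ ≤ 2 ^ (1 - r) * (A ^ (2:ℝ) + B ^ (2:ℝ)) ^ r := concave_step _ _ hr0 hr1
      _ = 2 ^ (1 - r) * (2 ^ r * (x ^ (2:ℝ) + y ^ (2:ℝ)) ^ r) := by
          rw [h, NNReal.mul_rpow]
      _ = 2 * (x ^ (2:ℝ) + y ^ (2:ℝ)) ^ r := by rw [← mul_assoc, h2r]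
      _ ≤ 2 * ((x ^ (2:ℝ)) ^ r + (y ^ (2:ℝ)) ^ r) := by
          exact mul_le_mul_right (NNReal.rpow_add_le_add_rpow _ _ hr0.le hr1) _
      _ = 2 * x ^ p + 2 * y ^ p := by rw [hsq, hsq, mul_add]
  · intro hp2
    have hr1 : 1 ≤ r := by rw [hr]; linarith
    calc 2 * x ^ p + 2 * y ^ p = 2 * ((x ^ (2:ℝ)) ^ r + (y ^ (2:ℝ)) ^ r) := by
          rw [hsq, hsq, mul_add]
      _ ≤ 2 * (x ^ (2:ℝ) + y ^ (2:ℝ)) ^ r := by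
          exact mul_le_mul_right (NNReal.add_rpow_le_rpow_add _ _ hr1) _
      _ = 2 ^ (1 - r) * (2 ^ r * (x ^ (2:ℝ) + y ^ (2:ℝ)) ^ r) := by rw [← mul_assoc, h2r]
      _ = 2 ^ (1 - r) * (A ^ (2:ℝ) + B ^ (2:ℝ)) ^ r := by rw [h, NNReal.mul_rpow]
      _ ≤ (A ^ (2:ℝ)) ^ r + (B ^ (2:ℝ)) ^ r := convex_step _ _ hr1
      _ = A ^ p + B ^ p := by rw [hsq, hsq]

theorem stmt3 (p : ℝ) (z w : ℂ) :
    (1 ≤ p → p < 2 →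
      0 ≤ 2 * ‖z‖ ^ p + 2 * ‖w‖ ^ p
            - ‖z + w‖ ^ p - ‖z - w‖ ^ p) ∧
    (2 < p →
      2 * ‖z‖ ^ p + 2 * ‖w‖ ^ p
            - ‖z + w‖ ^ p - ‖z - w‖ ^ p ≤ 0) := by
  have hpar := parallelogram_law_with_norm ℂ z w
  have hnn : ‖z + w‖₊ ^ (2:ℝ) + ‖z - w‖₊ ^ (2:ℝ) = 2 * (‖z‖₊ ^ (2:ℝ) + ‖w‖₊ ^ (2:ℝ)) := by
    have : (‖z + w‖₊ ^ (2:ℝ) + ‖z - w‖₊ ^ (2:ℝ) : ℝ)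
        = (2 * (‖z‖₊ ^ (2:ℝ) + ‖w‖₊ ^ (2:ℝ)) : ℝ≥0) := by
      push_cast [NNReal.coe_rpow, coe_nnnorm]
      rw [Real.rpow_two, Real.rpow_two, Real.rpow_two, Real.rpow_two]
      linarith [hpar]
    exact_mod_cast this
  have habs : ∀ u : ℂ, ‖u‖ ^ p = ‖u‖ ^ p := fun u => by
    rfl
  constructor
  · intro hp1 hp2
    have h := (nn_key _ _ _ _ hnn hp1).1 hp2.le
    have h' : (‖z + w‖₊ ^ p + ‖z - w‖₊ ^ p : ℝ) ≤ (2 * ‖z‖₊ ^ p + 2 * ‖w‖₊ ^ p : ℝ≥0) :=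
      by exact_mod_cast h
    push_cast at h'
    rw [habs z, habs w, habs (z+w), habs (z-w)]
    linarith
  · intro hp2
    have h := (nn_key _ _ _ _ hnn (by linarith)).2 hp2.le
    have h' : ((2 * ‖z‖₊ ^ p + 2 * ‖w‖₊ ^ p : ℝ≥0) : ℝ) ≤ (‖z + w‖₊ ^ p + ‖z - w‖₊ ^ p : ℝ) :=
      by exact_mod_cast h
    push_cast at h'
    rw [habs z, habs w, habs (z+w), habs (z-w)]
    linarith
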